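/- Main theorem (noncommutative spectral decomposition identity): let x₁,...,xₙ, z ∈ R with the Vandermonde matrix X = (x_j^{n-i})_{i,j} invertible, and define f₁,...,fₙ by X^{-1}(z^{n-1},...,1)^T. If z^n = x₁^n f₁(z) + ... + xₙ^n fₙ(z), then for every m ≥ 0, z^m = x₁^m f₁(z) + ... + xₙ^m fₙ(z). -/
import Mathlib


/-- Main theorem (noncommutative spectral decomposition identity): with the
Vandermonde matrix `X = (x_j^{n-i})` invertible (two-sided inverse `Y`) and
`f_i(z) = Σ_k Y i k · z^{n-1-k}`, if `zⁿ = Σ_i x_iⁿ f_i(z)` then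
`z^m = Σ_i x_i^m f_i(z)` for every `m ≥ 0`. -/
theorem noncomm_spectral_decomposition (R : Type*) [Ring R] (n : ℕ)
    (x : Fin n → R) (z : R) (Y : Matrix (Fin n) (Fin n) R)
    (hY1 : (Matrix.of fun i j : Fin n => x j ^ (n - 1 - i.val)) * Y = 1)
    (hY2 : Y * (Matrix.of fun i j : Fin n => x j ^ (n - 1 - i.val)) = 1)
    (hn : z ^ n = ∑ i : Fin n, x i ^ n * (∑ k : Fin n, Y i k * z ^ (n - 1 - k.val))) :
    ∀ m : ℕ, z ^ m = ∑ i : Fin n, x i ^ m * (∑ k : Fin n, Y i k * z ^ (n - 1 - k.val)) := by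
  rcases Nat.eq_zero_or_pos n with h0 | hpos
  · subst h0
    simp only [Finset.univ_eq_empty, Finset.sum_empty, pow_zero] at hn ⊢
    intro m
    calc z ^ m = z ^ m * 1 := (mul_one _).symm
    _ = z ^ m * 0 := by rw [← hn]
    _ = 0 := mul_zero _
  set e : Fin n → R := fun i => ∑ k : Fin n, Y i k * z ^ (n - 1 - k.val) with he
  set a : Fin n → R := fun k => ∑ j : Fin n, x j ^ n * Y j k with ha
  have hYX : ∀ j i : Fin n,
      (∑ k : Fin n, Y j k * x i ^ (n - 1 - k.val)) = if j = i then 1 else 0 := by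
    intro j i
    have := congrFun (congrFun hY2 j) i
    simpa [Matrix.mul_apply, Matrix.one_apply] using this
  have hXY : ∀ i k : Fin n,
      (∑ j : Fin n, x j ^ (n - 1 - i.val) * Y j k) = if i = k then 1 else 0 := by
    intro i k
    have := congrFun (congrFun hY1 i) k
    simpa [Matrix.mul_apply, Matrix.one_apply] using this
  -- every x i satisfies the recurrence with left coefficients a
  have hA : ∀ i : Fin n, (∑ k : Fin n, a k * x i ^ (n - 1 - k.val)) = x i ^ n := by
    intro i
    calc (∑ k : Fin n, a k * x i ^ (n - 1 - k.val))
        = ∑ k : Fin n, ∑ j : Fin n, x j ^ n * (Y j k * x i ^ (n - 1 - k.val)) := by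
          simp [ha, Finset.sum_mul, mul_assoc]
      _ = ∑ j : Fin n, x j ^ n * (∑ k : Fin n, Y j k * x i ^ (n - 1 - k.val)) := by
          rw [Finset.sum_comm]; simp [Finset.mul_sum]
      _ = ∑ j : Fin n, x j ^ n * (if j = i then 1 else 0) := by
          exact Finset.sum_congr rfl fun j _ => by rw [hYX j i]
      _ = x i ^ n := by simp
  -- z satisfies the same recurrence
  have hB : z ^ n = ∑ k : Fin n, a k * z ^ (n - 1 - k.val) := by
    rw [hn]
    calc (∑ i : Fin n, x i ^ n * (∑ k : Fin n, Y i k * z ^ (n - 1 - k.val)))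
        = ∑ i : Fin n, ∑ k : Fin n, x i ^ n * Y i k * z ^ (n - 1 - k.val) := by
          simp [Finset.mul_sum, mul_assoc]
      _ = ∑ k : Fin n, (∑ i : Fin n, x i ^ n * Y i k) * z ^ (n - 1 - k.val) := by
          rw [Finset.sum_comm]; simp [Finset.sum_mul]
      _ = ∑ k : Fin n, a k * z ^ (n - 1 - k.val) := by simp [ha]
  -- base cases p < n
  have hC : ∀ p : ℕ, p < n → z ^ p = ∑ i : Fin n, x i ^ p * e i := by
    intro p hp
    have hi0 : n - 1 - p < n := by omega
    set i0 : Fin n := ⟨n - 1 - p, hi0⟩ with hi0def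
    have hpe : n - 1 - i0.val = p := by
      show n - 1 - (n - 1 - p) = p
      omega
    calc z ^ p = z ^ (n - 1 - i0.val) := by rw [hpe]
      _ = ∑ k : Fin n, (if i0 = k then (1:R) else 0) * z ^ (n - 1 - k.val) := by
          rw [Finset.sum_eq_single i0]
          · rw [if_pos rfl, one_mul]
          · intro b _ hb
            rw [if_neg (fun h => hb h.symm), zero_mul]
          · intro h; exact absurd (Finset.mem_univ i0) h
      _ = ∑ k : Fin n, (∑ j : Fin n, x j ^ (n - 1 - i0.val) * Y j k) * z ^ (n - 1 - k.val) := by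
          exact Finset.sum_congr rfl fun k _ => by rw [hXY i0 k]
      _ = ∑ j : Fin n, x j ^ (n - 1 - i0.val) * (∑ k : Fin n, Y j k * z ^ (n - 1 - k.val)) := by
          simp only [Finset.sum_mul, Finset.mul_sum]
          rw [Finset.sum_comm]
          exact Finset.sum_congr rfl fun j _ =>
            Finset.sum_congr rfl fun k _ => by rw [mul_assoc]
      _ = ∑ i : Fin n, x i ^ p * e i := by rw [hpe]
  intro m
  induction m using Nat.strong_induction_on with
  | _ m ih =>
    rcases lt_or_ge m n with hm | hm
    · exact hC m hm
    rcases eq_or_lt_of_le hm with hm' | hm'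
    · rw [← hm']; exact hn
    · -- m > n
      have h1 : z ^ m = z ^ n * z ^ (m - n) := by
        rw [← pow_add]; congr 1; omega
      have h2 : ∀ k : Fin n, a k * z ^ (n - 1 - k.val) * z ^ (m - n)
          = a k * z ^ (m - 1 - k.val) := by
        intro k
        rw [mul_assoc, ← pow_add]
        have hk := k.isLt
        congr 2
        omega
      have h3 : ∀ k : Fin n, z ^ (m - 1 - k.val) = ∑ i : Fin n, x i ^ (m - 1 - k.val) * e i := by
        intro k
        exact ih _ (by omega)
      calc z ^ m = ∑ k : Fin n, a k * z ^ (n - 1 - k.val) * z ^ (m - n) := by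
            rw [h1, hB, Finset.sum_mul]
        _ = ∑ k : Fin n, a k * z ^ (m - 1 - k.val) := by
            exact Finset.sum_congr rfl fun k _ => h2 k
        _ = ∑ k : Fin n, ∑ i : Fin n, a k * (x i ^ (m - 1 - k.val) * e i) := by
            refine Finset.sum_congr rfl fun k _ => ?_
            rw [h3 k, Finset.mul_sum]
        _ = ∑ i : Fin n, (∑ k : Fin n, a k * x i ^ (m - 1 - k.val)) * e i := by
            rw [Finset.sum_comm]
            exact Finset.sum_congr rfl fun i _ => by
              rw [Finset.sum_mul]
              exact Finset.sum_congr rfl fun k _ => by rw [mul_assoc]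
        _ = ∑ i : Fin n, x i ^ m * e i := by
            refine Finset.sum_congr rfl fun i _ => ?_
            congr 1
            have hsplit : ∀ k : Fin n, x i ^ (m - 1 - k.val)
                = x i ^ (n - 1 - k.val) * x i ^ (m - n) := by
              intro k
              rw [← pow_add]
              have hk := k.isLt
              congr 1
              omega
            calc (∑ k : Fin n, a k * x i ^ (m - 1 - k.val))
                = (∑ k : Fin n, a k * x i ^ (n - 1 - k.val)) * x i ^ (m - n) := by
                  rw [Finset.sum_mul]
                  exact Finset.sum_congr rfl fun k _ => by rw [hsplit k, mul_assoc]
              _ = x i ^ n * x i ^ (m - n) := by rw [hA]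
              _ = x i ^ m := by rw [← pow_add]; congr 1; omega
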